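/- arXiv:1502.00966 — 4 statements merged into one kernel-verified Lean document; each statement's English description precedes it below -/
import Mathlib

section
/- Let d ≥ 2 and let ξ ∈ ℤ^d be nonzero. Then there exist vectors f¹,…,f^{d−1} ∈ ℤ^d such that f^j · ξ = 0 and ‖f^j‖ ≤ ‖ξ‖ for each j, and f¹,…,f^{d−1} are linearly independent over ℝ; hence they span the hyperplane ξ^⊥ = {x ∈ ℝ^d : x·ξ = 0} over ℝ. -/
/-- The Euclidean norm of an integer vector. -/
noncomputable def enormZ {d : ℕ} (ξ : Fin d → ℤ) : ℝ :=
  Real.sqrt (∑ i, ((ξ i : ℝ)) ^ 2)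

theorem lattice_basis_of_orthogonal_hyperplane (d : ℕ) (hd : 2 ≤ d)
    (ξ : Fin d → ℤ) (hξ : ξ ≠ 0) :
    ∃ f : Fin (d - 1) → (Fin d → ℤ),
      (∀ j, ∑ i, f j i * ξ i = 0) ∧
      (∀ j, enormZ (f j) ≤ enormZ ξ) ∧
      LinearIndependent ℝ (fun j => fun i => (f j i : ℝ)) ∧
      (Submodule.span ℝ (Set.range fun j => fun i => (f j i : ℝ)) : Set (Fin d → ℝ)) =
        {x : Fin d → ℝ | ∑ i, x i * (ξ i : ℝ) = 0} := by
  obtain ⟨i0, hi0⟩ : ∃ i, ξ i ≠ 0 := by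
    by_contra h; push_neg at h; exact hξ (funext h)
  have hn : d - 1 + 1 = d := by omega
  set e : Fin (d-1) → Fin d := fun j => Fin.cast hn ((Fin.cast hn.symm i0).succAbove j) with he
  have heinj : Function.Injective e := by
    intro a b hab
    exact Fin.succAbove_right_injective (Fin.cast_injective hn hab)
  have hei0 : ∀ j, e j ≠ i0 := by
    intro j h
    apply Fin.succAbove_ne (Fin.cast hn.symm i0) j
    apply Fin.cast_injective hn
    simpa using h
  set f : Fin (d-1) → Fin d → ℤ :=
    fun j i => (if i = e j then ξ i0 else 0) - (if i = i0 then ξ (e j) else 0) with hf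
  have horth : ∀ j, ∑ i, f j i * ξ i = 0 := by
    intro j
    simp [hf, sub_mul, Finset.sum_sub_distrib, ite_mul, Finset.sum_ite_eq']
    ring
  have hli : LinearIndependent ℝ (fun j => fun i => (f j i : ℝ)) := by
    rw [Fintype.linearIndependent_iff]
    intro c hc j
    have := congrFun hc (e j)
    simp only [Finset.sum_apply, Pi.smul_apply, smul_eq_mul, Pi.zero_apply] at this
    have hrw : ∀ j' : Fin (d-1),
        c j' * ((f j' (e j) : ℤ) : ℝ) = if j' = j then c j * (ξ i0 : ℝ) else 0 := by
      intro j'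
      by_cases h : j' = j
      · simp [hf, h, hei0 j]
      · have hne : e j ≠ e j' := fun hh => h (heinj hh.symm)
        simp [hf, hne, hei0 j, h]
    rw [Finset.sum_congr rfl fun j' _ => hrw j'] at this
    rw [Finset.sum_ite_eq'] at this
    simp only [Finset.mem_univ, if_true] at this
    rcases mul_eq_zero.mp this with h | h
    · exact h
    · exact absurd (by exact_mod_cast h) hi0
  refine ⟨f, horth, ?_, hli, ?_⟩
  · intro j
    unfold enormZ
    apply Real.sqrt_le_sqrt
    have key : ∀ i : Fin d, ((f j i : ℤ) : ℝ) ^ 2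
        = (if i = e j then (ξ i0 : ℝ)^2 else 0) + (if i = i0 then (ξ (e j) : ℝ)^2 else 0) := by
      intro i
      by_cases h1 : i = e j
      · have h2 : i ≠ i0 := h1 ▸ hei0 j
        simp [hf, h1, h2, hei0 j, Ne.symm (hei0 j)]
      · by_cases h2 : i = i0 <;> simp [hf, h1, h2, hei0 j, Ne.symm (hei0 j)]
    rw [Finset.sum_congr rfl fun i _ => key i]
    rw [Finset.sum_add_distrib, Finset.sum_ite_eq', Finset.sum_ite_eq']
    simp only [Finset.mem_univ, if_true]
    have hpair : (ξ i0 : ℝ)^2 + (ξ (e j) : ℝ)^2 = ∑ i ∈ ({i0, e j} : Finset (Fin d)), (ξ i : ℝ)^2 := by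
      rw [Finset.sum_pair (Ne.symm (hei0 j))]
    rw [hpair]
    apply Finset.sum_le_sum_of_subset_of_nonneg (Finset.subset_univ _)
    intro i _ _; positivity
  · let φ : (Fin d → ℝ) →ₗ[ℝ] ℝ :=
      { toFun := fun x => ∑ i, x i * (ξ i : ℝ)
        map_add' := by intro x y; simp [add_mul, Finset.sum_add_distrib]
        map_smul' := by intro c x; simp [Finset.mul_sum, mul_assoc] }
    have hker : (LinearMap.ker φ : Set (Fin d → ℝ)) = {x | ∑ i, x i * (ξ i : ℝ) = 0} := by
      ext x; simp [φ, LinearMap.mem_ker]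
    have hle : Submodule.span ℝ (Set.range fun j => fun i => (f j i : ℝ)) ≤ LinearMap.ker φ := by
      rw [Submodule.span_le]
      rintro _ ⟨j, rfl⟩
      simp only [SetLike.mem_coe, LinearMap.mem_ker]
      show ∑ i, (f j i : ℝ) * (ξ i : ℝ) = 0
      exact_mod_cast congrArg (fun z : ℤ => (z : ℝ)) (horth j)
    have h1 : Module.finrank ℝ (Submodule.span ℝ (Set.range fun j => fun i => (f j i : ℝ))) = d - 1 := by
      rw [finrank_span_eq_card hli]; simp
    have hne : LinearMap.ker φ ≠ ⊤ := by
      intro h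
      have hx : (fun i => (ξ i : ℝ)) ∈ LinearMap.ker φ := h ▸ Submodule.mem_top
      rw [LinearMap.mem_ker] at hx
      have hx' : ∑ i, (ξ i : ℝ) * (ξ i : ℝ) = 0 := hx
      have hz : ∀ i ∈ Finset.univ, (ξ i : ℝ) * (ξ i : ℝ) = 0 := by
        rw [← Finset.sum_eq_zero_iff_of_nonneg (fun i _ => mul_self_nonneg _)]
        exact hx'
      apply hξ
      funext i
      have h0 := hz i (Finset.mem_univ i)
      have : (ξ i : ℝ) = 0 := by nlinarith [h0]
      exact_mod_cast this
    have hfr : Module.finrank ℝ (Fin d → ℝ) = d := by simp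
    have h2 : Module.finrank ℝ (LinearMap.ker φ) < d := by
      calc Module.finrank ℝ (LinearMap.ker φ) < Module.finrank ℝ (Fin d → ℝ) :=
            Submodule.finrank_lt hne
        _ = d := hfr
    have heq : Submodule.span ℝ (Set.range fun j => fun i => (f j i : ℝ)) = LinearMap.ker φ := by
      apply Submodule.eq_of_le_of_finrank_le hle
      rw [h1]; omega
    rw [heq, hker]
end

section
/- Let d ≥ 2, Λ ≥ 1 and β ∈ (0,1). There exists C > 0 depending only on d, Λ and β with the following property. Let K ⊆ ℝ^d be an open set with 0 ∈ ∂K and B₁ ∩ K ⊆ {x ∈ ℝ^d : x_d > 0}, where B₁ is the open unit ball. Let u be continuous on the closure of B₁ ∩ K and twice continuously differentiable on B₁ ∩ K, with u(x) ≤ 1 for all x ∈ B₁ ∩ K, P⁺_{1,Λ}(D²u(x)) ≥ 0 for all x ∈ B₁ ∩ K (i.e. u is a classical subsolution of −P⁺_{1,Λ}(D²u) ≤ 0), and u(x) ≤ ‖x‖^β for all x in the topological boundary ∂(B₁ ∩ K). Then u(x) ≤ C·‖x‖^β for all x ∈ B₁ ∩ K. -/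
open Matrix

/-- Pucci maximal operator: `Λ·Σ_{eᵢ>0} eᵢ + λ·Σ_{eᵢ<0} eᵢ` over the eigenvalues of a
symmetric matrix (junk value `0` on non-symmetric matrices). -/
noncomputable def pucciPlus {d : ℕ} (lam Lam : ℝ) (M : Matrix (Fin d) (Fin d) ℝ) : ℝ :=
  if h : M.IsHermitian then
    ∑ i, (Lam * max (h.eigenvalues i) 0 + lam * min (h.eigenvalues i) 0)
  else 0

/-- The Hessian matrix of `f : ℝ^d → ℝ` at `y`. -/
noncomputable def hessianE {d : ℕ} (f : EuclideanSpace ℝ (Fin d) → ℝ)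
    (y : EuclideanSpace ℝ (Fin d)) : Matrix (Fin d) (Fin d) ℝ :=
  Matrix.of fun i j =>
    iteratedFDeriv ℝ 2 f y ![EuclideanSpace.single i 1, EuclideanSpace.single j 1]


/-- 1D second derivative test at a local max. -/
lemma sd_test {φ φ' : ℝ → ℝ} {c : ℝ}
    (hmax : IsLocalMax φ 0)
    (hd : ∀ᶠ t in nhds (0:ℝ), HasDerivAt φ (φ' t) t)
    (hd' : HasDerivAt φ' c 0) : c ≤ 0 := by
  by_contra hc
  push_neg at hc
  have h0 : φ' 0 = 0 := hmax.hasDerivAt_eq_zero hd.self_of_nhds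
  have hslope : Filter.Tendsto (fun t => φ' t / t) (nhdsWithin 0 {(0:ℝ)}ᶜ) (nhds c) := by
    have h := hasDerivAt_iff_tendsto_slope.mp hd'
    refine h.congr' ?_
    filter_upwards with t
    simp [slope_def_field, h0]
  have E1 : ∀ᶠ t in nhdsWithin 0 {(0:ℝ)}ᶜ, c/2 < φ' t / t :=
    hslope.eventually (eventually_gt_nhds (half_lt_self hc))
  have E2 : ∀ᶠ t in nhdsWithin 0 {(0:ℝ)}ᶜ,
      (c/2 < φ' t / t ∧ HasDerivAt φ (φ' t) t ∧ φ t ≤ φ 0) := by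
    refine E1.and (Filter.Eventually.filter_mono nhdsWithin_le_nhds ?_)
    exact hd.and hmax
  obtain ⟨ρ, hρ0, hρ⟩ := Metric.mem_nhdsWithin_iff.mp E2
  set t₀ := ρ/2 with ht₀
  have ht₀0 : 0 < t₀ := by positivity
  have hprop : ∀ t : ℝ, 0 < t → t ≤ t₀ →
      (c/2 < φ' t / t ∧ HasDerivAt φ (φ' t) t ∧ φ t ≤ φ 0) := by
    intro t ht1 ht2
    apply hρ
    constructor
    · simp only [Metric.mem_ball, Real.dist_eq, sub_zero]
      rw [abs_of_pos ht1]; linarith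
    · simp only [Set.mem_compl_iff, Set.mem_singleton_iff]; exact ne_of_gt ht1
  have hcontOn : ContinuousOn φ (Set.Icc 0 t₀) := by
    intro t ht
    rcases eq_or_lt_of_le ht.1 with h | h
    · subst h; exact hd.self_of_nhds.continuousAt.continuousWithinAt
    · exact ((hprop t h ht.2).2.1.continuousAt).continuousWithinAt
  obtain ⟨σ, hσ, hσeq⟩ := exists_hasDerivAt_eq_slope φ φ' ht₀0 hcontOn
    (fun y hy => (hprop y hy.1 hy.2.le).2.1)
  have h1 : φ' σ ≤ 0 := by
    rw [hσeq]
    have := (hprop t₀ ht₀0 le_rfl).2.2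
    apply div_nonpos_of_nonpos_of_nonneg <;> simp <;> linarith
  have h2 : 0 < φ' σ := by
    have hs := (hprop σ hσ.1 hσ.2.le).1
    have : 0 < φ' σ / σ := lt_trans (by positivity) hs
    exact (div_pos_iff.mp this).resolve_right (fun ⟨_, h⟩ => absurd hσ.1 (by linarith)) |>.1
  linarith

lemma psd_diag_nonneg {d : ℕ} {P : Matrix (Fin d) (Fin d) ℝ} (hP : P.PosSemidef) (i : Fin d) :
    0 ≤ P i i := by
  exact hP.diag_nonneg

lemma psd_trace_nonneg {d : ℕ} {P : Matrix (Fin d) (Fin d) ℝ} (hP : P.PosSemidef) :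
    0 ≤ P.trace := by
  exact Finset.sum_nonneg fun i _ => psd_diag_nonneg hP i

open scoped MatrixOrder in
lemma psd_trace_mul_nonneg {d : ℕ} {A B : Matrix (Fin d) (Fin d) ℝ}
    (hA : A.PosSemidef) (hB : B.PosSemidef) : 0 ≤ (A * B).trace := by
  obtain ⟨S, hS⟩ :=
    CStarAlgebra.nonneg_iff_eq_star_mul_self.mp hB.nonneg
  have h1 : A * B = A * star S * S := by rw [Matrix.mul_assoc, hS]
  rw [h1, Matrix.trace_mul_cycle]
  have : (S * A * S.conjTranspose).PosSemidef :=
    hA.mul_mul_conjTranspose_same S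
  rw [← Matrix.star_eq_conjTranspose] at this
  exact psd_trace_nonneg this
lemma pucci_le_diag {d : ℕ} {Λ : ℝ} (hΛ : 1 ≤ Λ)
    {M : Matrix (Fin d) (Fin d) ℝ} (hM : M.IsHermitian) (dv : Fin d → ℝ)
    (hle : ∀ ξ : Fin d → ℝ, ξ ⬝ᵥ M.mulVec ξ ≤ ξ ⬝ᵥ (Matrix.diagonal dv).mulVec ξ) :
    pucciPlus 1 Λ M ≤ ∑ i, (Λ * max (dv i) 0 + min (dv i) 0) := by
  set e := hM.eigenvalues with he
  set U := (hM.eigenvectorUnitary : Matrix (Fin d) (Fin d) ℝ) with hU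
  have hU1 : star U * U = 1 := hM.eigenvectorUnitary.2.1
  have hU2 : U * star U = 1 := hM.eigenvectorUnitary.2.2
  have hspec : M = U * Matrix.diagonal e * star U := by
    have := hM.spectral_theorem
    simpa using this
  set a : Fin d → ℝ := fun i => if 0 ≤ e i then Λ else 1 with ha
  set A := U * Matrix.diagonal a * star U with hA
  have ha1 : ∀ i, 1 ≤ a i := by
    intro i; simp only [ha]; split <;> [exact hΛ; exact le_rfl]
  have haΛ : ∀ i, a i ≤ Λ := by
    intro i; simp only [ha]; split <;> [exact le_rfl; exact hΛ]
  -- pucci = ∑ a i * e i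
  have key1 : pucciPlus 1 Λ M = ∑ i, a i * e i := by
    rw [pucciPlus, dif_pos hM]
    refine Finset.sum_congr rfl fun i _ => ?_
    by_cases h : 0 ≤ e i
    · rw [show a i = Λ by simp [ha, h], max_eq_left h, min_eq_right h]; ring
    · push_neg at h
      rw [show a i = 1 by simp [ha, not_le.mpr h], max_eq_right h.le, min_eq_left h.le]; ring
  -- trace identities
  have hAM : A * M = U * Matrix.diagonal (fun i => a i * e i) * star U := by
    rw [hA, hspec]
    calc U * Matrix.diagonal a * star U * (U * Matrix.diagonal e * star U)
        = U * Matrix.diagonal a * (star U * U) * Matrix.diagonal e * star U := by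
          simp only [Matrix.mul_assoc]
      _ = U * (Matrix.diagonal a * Matrix.diagonal e) * star U := by
          rw [hU1]; simp only [Matrix.mul_one, Matrix.mul_assoc]
      _ = U * Matrix.diagonal (fun i => a i * e i) * star U := by
          rw [Matrix.diagonal_mul_diagonal]
  have htraceconj : ∀ v : Fin d → ℝ, (U * Matrix.diagonal v * star U).trace = ∑ i, v i := by
    intro v
    rw [Matrix.trace_mul_cycle, hU1, Matrix.one_mul, Matrix.trace_diagonal]
  have key2 : (A * M).trace = ∑ i, a i * e i := by rw [hAM, htraceconj]
  -- A is psd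
  have hApsd : A.PosSemidef := by
    have hdiag : (Matrix.diagonal a).PosSemidef :=
      Matrix.posSemidef_diagonal_iff.mpr fun i => le_trans zero_le_one (ha1 i)
    have := hdiag.mul_mul_conjTranspose_same U
    rwa [← Matrix.star_eq_conjTranspose] at this
  -- D - M is psd
  have hDM : (Matrix.diagonal dv - M).PosSemidef := by
    refine Matrix.PosSemidef.of_dotProduct_mulVec_nonneg ?_ ?_
    · exact (Matrix.isHermitian_diagonal dv).sub hM
    · intro x
      have := hle x
      simp only [Matrix.sub_mulVec, dotProduct_sub, star_trivial]
      linarith [hle x]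
  have key3 : (A * M).trace ≤ (A * Matrix.diagonal dv).trace := by
    have h := psd_trace_mul_nonneg hApsd hDM
    rw [Matrix.mul_sub, Matrix.trace_sub] at h
    linarith
  -- diagonal entries of A
  have hAii : ∀ i, A i i = ∑ k, a k * (U i k * U i k) := by
    intro i
    rw [hA, Matrix.mul_apply]
    refine Finset.sum_congr rfl fun k _ => ?_
    rw [Matrix.mul_diagonal, Matrix.star_apply, star_trivial]
    ring
  have hrow : ∀ i, ∑ k, U i k * U i k = 1 := by
    intro i
    have := congrFun (congrFun hU2 i) i
    rw [Matrix.mul_apply] at this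
    simpa [Matrix.star_apply, star_trivial] using this
  have hA1 : ∀ i, 1 ≤ A i i := by
    intro i
    rw [hAii i, ← hrow i]
    refine Finset.sum_le_sum fun k _ => ?_
    exact le_mul_of_one_le_left (mul_self_nonneg _) (ha1 k)
  have hAΛ : ∀ i, A i i ≤ Λ := by
    intro i
    have : ∑ k, a k * (U i k * U i k) ≤ ∑ k, Λ * (U i k * U i k) :=
      Finset.sum_le_sum fun k _ => mul_le_mul_of_nonneg_right (haΛ k) (mul_self_nonneg _)
    rw [hAii i]
    calc ∑ k, a k * (U i k * U i k) ≤ ∑ k, Λ * (U i k * U i k) := this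
      _ = Λ * ∑ k, U i k * U i k := by rw [Finset.mul_sum]
      _ = Λ := by rw [hrow i, mul_one]
  have key4 : (A * Matrix.diagonal dv).trace = ∑ i, A i i * dv i := by
    rw [Matrix.trace]
    exact Finset.sum_congr rfl fun i _ => by rw [Matrix.diag_apply, Matrix.mul_diagonal]
  have key5 : ∑ i, A i i * dv i ≤ ∑ i, (Λ * max (dv i) 0 + min (dv i) 0) := by
    refine Finset.sum_le_sum fun i _ => ?_
    by_cases h : 0 ≤ dv i
    · rw [max_eq_left h, min_eq_right h]
      have := mul_le_mul_of_nonneg_right (hAΛ i) h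
      linarith
    · push_neg at h
      rw [max_eq_right h.le, min_eq_left h.le]
      have := mul_le_mul_of_nonpos_right (hA1 i) h.le
      linarith
  calc pucciPlus 1 Λ M = (A * M).trace := by rw [key1, key2]
    _ ≤ (A * Matrix.diagonal dv).trace := key3
    _ = ∑ i, A i i * dv i := key4
    _ ≤ _ := key5

lemma quadform_eq {d : ℕ}
    (B : EuclideanSpace ℝ (Fin d) →L[ℝ] EuclideanSpace ℝ (Fin d) →L[ℝ] ℝ)
    (ξ : EuclideanSpace ℝ (Fin d)) :
    B ξ ξ = ∑ i, ∑ j, ξ i * ξ j *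
      B (EuclideanSpace.single i 1) (EuclideanSpace.single j 1) := by
  have hx : ∑ i, ξ i • (EuclideanSpace.single i (1:ℝ) : EuclideanSpace ℝ (Fin d)) = ξ := by
    have h := (EuclideanSpace.basisFun (Fin d) ℝ).sum_repr ξ
    simpa [EuclideanSpace.basisFun_apply, EuclideanSpace.basisFun_repr] using h
  calc B ξ ξ = B (∑ i, ξ i • (EuclideanSpace.single i (1:ℝ) : EuclideanSpace ℝ (Fin d))) ξ := by
        rw [hx]
    _ = ∑ i, ξ i * B (EuclideanSpace.single i 1) ξ := by
        rw [map_sum, ContinuousLinearMap.sum_apply]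
        exact Finset.sum_congr rfl fun i _ => by
          rw [_root_.map_smul, ContinuousLinearMap.smul_apply, smul_eq_mul]
    _ = ∑ i, ξ i * ∑ j, ξ j * B (EuclideanSpace.single i 1) (EuclideanSpace.single j 1) := by
        refine Finset.sum_congr rfl fun i _ => ?_
        congr 1
        conv_lhs => rw [← hx]
        rw [map_sum]
        exact Finset.sum_congr rfl fun j _ => by rw [_root_.map_smul, smul_eq_mul]
    _ = ∑ i, ∑ j, ξ i * ξ j * B (EuclideanSpace.single i 1) (EuclideanSpace.single j 1) := by
        refine Finset.sum_congr rfl fun i _ => ?_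
        rw [Finset.mul_sum]
        exact Finset.sum_congr rfl fun j _ => by ring

lemma line_package {d : ℕ} {u : EuclideanSpace ℝ (Fin d) → ℝ}
    {x₀ : EuclideanSpace ℝ (Fin d)} (hu : ContDiffAt ℝ 2 u x₀) (ξ : EuclideanSpace ℝ (Fin d)) :
    (∀ᶠ t in nhds (0:ℝ), HasDerivAt (fun s => u (x₀ + s • ξ)) (fderiv ℝ u (x₀ + t • ξ) ξ) t)
    ∧ HasDerivAt (fun t : ℝ => fderiv ℝ u (x₀ + t • ξ) ξ) (fderiv ℝ (fderiv ℝ u) x₀ ξ ξ) (0:ℝ) := by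
  have hL : ∀ t : ℝ, HasDerivAt (fun s : ℝ => x₀ + s • ξ) ξ t := by
    intro t
    simpa using ((hasDerivAt_id t).smul_const ξ).const_add x₀
  have htends : Filter.Tendsto (fun t : ℝ => x₀ + t • ξ) (nhds 0) (nhds x₀) := by
    have := (hL 0).continuousAt
    simpa using this.tendsto
  have hdiff : ∀ᶠ y in nhds x₀, DifferentiableAt ℝ u y := by
    have hev : ∀ᶠ y in nhds x₀, ContDiffAt ℝ 2 u y := hu.eventually (by simp)
    filter_upwards [hev] with y hy
    exact hy.differentiableAt two_ne_zero
  constructor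
  · filter_upwards [htends.eventually hdiff] with t ht
    exact ht.hasFDerivAt.comp_hasDerivAt t (hL t)
  · have hf' : DifferentiableAt ℝ (fderiv ℝ u) x₀ := by
      have h2 : ContDiffAt ℝ 1 (fderiv ℝ u) x₀ := hu.fderiv_right (by norm_num)
      exact h2.differentiableAt one_ne_zero
    have h3 : HasDerivAt (fun t : ℝ => fderiv ℝ u (x₀ + t • ξ))
        (fderiv ℝ (fderiv ℝ u) x₀ ξ) 0 := by
      refine HasFDerivAt.comp_hasDerivAt_of_eq (0:ℝ) hf'.hasFDerivAt (hL 0) (by simp)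
    have h4 := (ContinuousLinearMap.apply ℝ ℝ ξ).hasFDerivAt.comp_hasDerivAt 0 h3
    simpa [Function.comp_def] using h4

lemma hessianE_entry {d : ℕ} (u : EuclideanSpace ℝ (Fin d) → ℝ) (y : EuclideanSpace ℝ (Fin d))
    (i j : Fin d) :
    hessianE u y i j
      = fderiv ℝ (fderiv ℝ u) y (EuclideanSpace.single i 1) (EuclideanSpace.single j 1) := by
  rw [hessianE, Matrix.of_apply, iteratedFDeriv_two_apply]
  simp
lemma sumsq_eq {d : ℕ} (x : EuclideanSpace ℝ (Fin d)) : ∑ i, (x i)^2 = ‖x‖^2 := by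
  rw [EuclideanSpace.norm_eq, Real.sq_sqrt (Finset.sum_nonneg fun i _ => sq_nonneg _)]
  exact Finset.sum_congr rfl fun i _ => by rw [Real.norm_eq_abs, sq_abs]

lemma coord_cont {d : ℕ} (i : Fin d) :
    Continuous fun y : EuclideanSpace ℝ (Fin d) => y i :=
  (EuclideanSpace.proj (𝕜 := ℝ) i).continuous

set_option maxHeartbeats 1000000 in
lemma barrier_step {d : ℕ} (hd : 2 ≤ d) {Λ : ℝ} (hΛ : 1 ≤ Λ) (i₀ : Fin d)
    {K : Set (EuclideanSpace ℝ (Fin d))} (hK : IsOpen K)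
    (hhalf : Metric.ball 0 1 ∩ K ⊆ {x : EuclideanSpace ℝ (Fin d) | 0 < x i₀})
    {u : EuclideanSpace ℝ (Fin d) → ℝ}
    (hcont : ContinuousOn u (closure (Metric.ball 0 1 ∩ K)))
    (hC2 : ContDiffOn ℝ 2 u (Metric.ball 0 1 ∩ K))
    (hsub : ∀ x ∈ Metric.ball 0 1 ∩ K, 0 ≤ pucciPlus 1 Λ (hessianE u x))
    {r b m ε : ℝ} (hr0 : 0 < r) (hr1 : r < 1) (hb : 0 ≤ b) (hbm : b ≤ m) (hε : 0 < ε)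
    (hm : ∀ x ∈ Metric.sphere (0:EuclideanSpace ℝ (Fin d)) r ∩ K, u x ≤ m)
    (hbd : ∀ x ∈ (closure K \ K) ∩ Metric.closedBall (0:EuclideanSpace ℝ (Fin d)) r, u x ≤ b) :
    ∀ x ∈ Metric.ball (0:EuclideanSpace ℝ (Fin d)) r ∩ K,
      u x ≤ b + ε + (m - b) * ((1 + Λ*((d:ℝ)-1)) * (x i₀) / r + ‖x‖^2 / r^2) := by
  intro x hx
  have hrne : r ≠ 0 := ne_of_gt hr0
  have hd1 : (1:ℝ) ≤ (d:ℝ) - 1 := by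
    have : (2:ℝ) ≤ (d:ℝ) := by exact_mod_cast hd
    linarith
  set A := 1 + Λ*((d:ℝ)-1) with hAdef
  have hΛd : 0 ≤ Λ*((d:ℝ)-1) := by nlinarith
  have hA1 : 1 ≤ A := by rw [hAdef]; linarith
  set q := m - b with hqdef
  have hq0 : 0 ≤ q := by rw [hqdef]; linarith
  set c₁ := q * A / r with hc1def
  set p := (q - ε)/r^2 with hpdef
  set s := -(q*A)/r^2 with hsdef
  have hs0 : s ≤ 0 := by
    rw [hsdef]
    apply div_nonpos_of_nonpos_of_nonneg
    · simp; positivity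
    · positivity
  set w : EuclideanSpace ℝ (Fin d) → ℝ :=
    fun y => b + ε + c₁ * y i₀ + p * (∑ i, (y i)^2) + s * (y i₀)^2 with hw
  have hsum_cont : Continuous fun y : EuclideanSpace ℝ (Fin d) => ∑ i, (y i)^2 :=
    continuous_finset_sum _ (fun i _ => (coord_cont i).pow 2)
  have hwcont : Continuous w := by
    rw [hw]
    exact ((continuous_const.add (continuous_const.mul (coord_cont i₀))).add
      (continuous_const.mul hsum_cont)).add
      (continuous_const.mul ((coord_cont i₀).pow 2))
  set Ω := Metric.ball (0:EuclideanSpace ℝ (Fin d)) r ∩ K with hΩdef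
  have hΩopen : IsOpen Ω := Metric.isOpen_ball.inter hK
  have hΩsub : Ω ⊆ Metric.ball 0 1 ∩ K :=
    Set.inter_subset_inter_left _ (Metric.ball_subset_ball hr1.le)
  have hclosΩ : closure Ω ⊆ Metric.closedBall 0 r :=
    closure_minimal (fun y hy => Metric.ball_subset_closedBall hy.1) Metric.isClosed_closedBall
  have hclosK : closure Ω ⊆ closure K := closure_mono Set.inter_subset_right
  have hclosBK : closure Ω ⊆ closure (Metric.ball 0 1 ∩ K) := closure_mono hΩsub
  have hpos : ∀ y ∈ Ω, 0 < y i₀ := fun y hy => hhalf (hΩsub hy)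
  have hclos_nonneg : ∀ y ∈ closure Ω, 0 ≤ y i₀ := by
    have hsub2 : closure Ω ⊆ {y : EuclideanSpace ℝ (Fin d) | 0 ≤ y i₀} :=
      closure_minimal (fun y hy => (hpos y hy).le)
        (isClosed_le continuous_const (coord_cont i₀))
    exact fun y hy => hsub2 hy
  set v := fun y => u y - w y with hv
  have hvc : ContinuousOn v (closure Ω) := (hcont.mono hclosBK).sub hwcont.continuousOn
  have hcomp : IsCompact (closure Ω) :=
    (isCompact_closedBall (0:EuclideanSpace ℝ (Fin d)) r).of_isClosed_subset
      isClosed_closure hclosΩ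
  obtain ⟨x₀, hx₀mem, hx₀max⟩ := hcomp.exists_isMaxOn ⟨x, subset_closure hx⟩ hvc
  have hτsq : ∀ y : EuclideanSpace ℝ (Fin d), (y i₀)^2 ≤ ‖y‖^2 := fun y => by
    rw [← sumsq_eq]
    exact Finset.single_le_sum (f := fun i => (y i)^2) (fun i _ => sq_nonneg _)
      (Finset.mem_univ i₀)
  have hvx₀ : v x₀ ≤ 0 := by
    by_cases hx₀Ω : x₀ ∈ Ω
    · exfalso
      have hx₀BK : x₀ ∈ Metric.ball 0 1 ∩ K := hΩsub hx₀Ω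
      have huC2 : ContDiffAt ℝ 2 u x₀ :=
        hC2.contDiffAt ((Metric.isOpen_ball.inter hK).mem_nhds hx₀BK)
      have hloc : IsLocalMax v x₀ :=
        hx₀max.filter_mono (Filter.le_principal_iff.mpr
          (Filter.mem_of_superset (hΩopen.mem_nhds hx₀Ω) subset_closure))
      set D2 := fderiv ℝ (fderiv ℝ u) x₀ with hD2
      have key : ∀ ξ : EuclideanSpace ℝ (Fin d),
          D2 ξ ξ ≤ 2*p*(∑ i, (ξ i)^2) + 2*s*(ξ i₀)^2 := by
        intro ξ
        obtain ⟨hev, hd'⟩ := line_package huC2 ξ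
        set a1 := c₁ * ξ i₀ + p * (2*∑ i, x₀ i * ξ i) + s*(2*(x₀ i₀)*(ξ i₀)) with ha1
        set a2 := p*(∑ i, (ξ i)^2) + s*(ξ i₀)^2 with ha2
        have hap : ∀ (t : ℝ) (i : Fin d), (x₀ + t • ξ) i = x₀ i + t * ξ i :=
          fun t i => rfl
        have hχ : ∀ t : ℝ, w (x₀ + t • ξ) = w x₀ + a1*t + a2*t^2 := by
          intro t
          simp only [hw, hap, ha1, ha2]
          have hsq : ∑ i, (x₀ i + t*ξ i)^2
              = (∑ i, (x₀ i)^2) + (2*∑ i, x₀ i * ξ i)*t + (∑ i, (ξ i)^2)*t^2 := by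
            rw [Finset.sum_congr rfl (fun i _ => show (x₀ i + t*ξ i)^2
              = (x₀ i)^2 + (2*(x₀ i * ξ i))*t + (ξ i)^2*t^2 by ring)]
            rw [Finset.sum_add_distrib, Finset.sum_add_distrib, ← Finset.sum_mul,
              ← Finset.sum_mul, ← Finset.mul_sum]
          rw [hsq]; ring
        set φ' := fun t : ℝ => fderiv ℝ u (x₀ + t • ξ) ξ - (a1 + 2*a2*t) with hφ'
        have hpoly : ∀ t : ℝ, HasDerivAt (fun t : ℝ => w x₀ + a1*t + a2*t^2)
            (a1 + 2*a2*t) t := by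
          intro t
          have h1 : HasDerivAt (fun t : ℝ => a1*t) a1 t := by
            simpa using (hasDerivAt_id t).const_mul a1
          have h2 : HasDerivAt (fun t : ℝ => a2*t^2) (a2*(2*t)) t := by
            simpa using (hasDerivAt_pow 2 t).const_mul a2
          have h3 : HasDerivAt (fun t : ℝ => w x₀ + a1*t + a2*t^2) (0 + a1 + a2*(2*t)) t :=
            ((hasDerivAt_const t (w x₀)).add h1).add h2
          convert h3 using 1
          ring
        have hφev : ∀ᶠ t in nhds (0:ℝ),
            HasDerivAt (fun t : ℝ => u (x₀+t•ξ) - w (x₀+t•ξ)) (φ' t) t := by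
          filter_upwards [hev] with t ht
          have h2 : HasDerivAt (fun t : ℝ => w (x₀+t•ξ)) (a1 + 2*a2*t) t := by
            have heq : (fun t : ℝ => w (x₀+t•ξ)) = fun t : ℝ => w x₀ + a1*t + a2*t^2 :=
              funext hχ
            rw [heq]; exact hpoly t
          exact ht.sub h2
        have hφ'd : HasDerivAt φ' (D2 ξ ξ - 2*a2) 0 := by
          have h2 : HasDerivAt (fun t : ℝ => a1 + 2*a2*t) (2*a2) 0 := by
            simpa using ((hasDerivAt_id (0:ℝ)).const_mul (2*a2)).const_add a1
          exact hd'.sub h2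
        have hφmax : IsLocalMax (fun t : ℝ => u (x₀+t•ξ) - w (x₀+t•ξ)) 0 := by
          have htends : Filter.Tendsto (fun t : ℝ => x₀ + t • ξ) (nhds 0) (nhds x₀) := by
            have hc : Continuous fun t : ℝ => x₀ + t • ξ :=
              continuous_const.add (continuous_id.smul continuous_const)
            have h0 : x₀ + (0:ℝ) • ξ = x₀ := by simp
            have := hc.tendsto (0:ℝ)
            rwa [h0] at this
          have h0 : x₀ + (0:ℝ) • ξ = x₀ := by simp
          filter_upwards [htends.eventually hloc] with t ht
          simpa [hv, h0] using ht
        have hsd := sd_test hφmax hφev hφ'd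
        simp only [ha2] at hsd
        linarith
      set M := hessianE u x₀ with hMdef
      have hMentry : ∀ i j, M i j
          = D2 (EuclideanSpace.single i 1) (EuclideanSpace.single j 1) :=
        fun i j => hessianE_entry u x₀ i j
      have hsymm : IsSymmSndFDerivAt ℝ u x₀ := huC2.isSymmSndFDerivAt (by simp)
      have hherm : M.IsHermitian := by
        rw [Matrix.IsHermitian]
        ext i j
        rw [Matrix.conjTranspose_apply, star_trivial, hMentry, hMentry]
        exact hsymm _ _
      set dv : Fin d → ℝ := fun i => 2*p + (if i = i₀ then 2*s else 0) with hdvdef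
      have hquad : ∀ ξv : Fin d → ℝ,
          ξv ⬝ᵥ M.mulVec ξv ≤ ξv ⬝ᵥ (Matrix.diagonal dv).mulVec ξv := by
        intro ξv
        set ξ : EuclideanSpace ℝ (Fin d) := (WithLp.equiv 2 (Fin d → ℝ)).symm ξv with hξdef
        have hξap : ∀ i, ξ i = ξv i := fun i => rfl
        have hlhs : ξv ⬝ᵥ M.mulVec ξv = D2 ξ ξ := by
          rw [quadform_eq D2 ξ]
          simp only [dotProduct, Matrix.mulVec, hMentry, hξap]
          refine Finset.sum_congr rfl fun i _ => ?_
          rw [Finset.mul_sum]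
          exact Finset.sum_congr rfl fun j _ => by ring
        have hrhs : ξv ⬝ᵥ (Matrix.diagonal dv).mulVec ξv
            = 2*p*(∑ i, (ξ i)^2) + 2*s*(ξ i₀)^2 := by
          simp only [dotProduct, Matrix.mulVec_diagonal, hdvdef, hξap]
          rw [Finset.sum_congr rfl (fun i _ => show
            ξv i * ((2*p + (if i = i₀ then 2*s else 0)) * ξv i)
              = 2*p*(ξv i)^2 + (if i = i₀ then 2*s*(ξv i)^2 else 0) by split <;> ring)]
          rw [Finset.sum_add_distrib, ← Finset.mul_sum, Finset.sum_ite_eq' Finset.univ i₀]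
          simp
        rw [hlhs, hrhs]
        exact key ξ
      have hple := pucci_le_diag hΛ hherm dv hquad
      have hps : p + s < 0 := by
        have hnum : q - ε + -(q*A) < 0 := by nlinarith
        have heq : p + s = (q - ε + -(q*A))/r^2 := by
          rw [hpdef, hsdef]; ring
        rw [heq]
        exact div_neg_of_neg_of_pos hnum (by positivity)
      have hsumlt : ∑ i, (Λ * max (dv i) 0 + min (dv i) 0) < 0 := by
        have hsplit : ∑ i, (Λ * max (dv i) 0 + min (dv i) 0)
            = (Λ * max (2*p+2*s) 0 + min (2*p+2*s) 0)
              + ((d:ℝ)-1) * (Λ * max (2*p) 0 + min (2*p) 0) := by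
          rw [← Finset.add_sum_erase _ _ (Finset.mem_univ i₀)]
          congr 1
          · rw [hdvdef]; simp
          · have hconst : ∀ i ∈ Finset.univ.erase i₀,
                (Λ * max (dv i) 0 + min (dv i) 0) = (Λ * max (2*p) 0 + min (2*p) 0) := by
              intro i hi
              rw [hdvdef]
              simp [(Finset.mem_erase.mp hi).1]
            rw [Finset.sum_congr rfl hconst, Finset.sum_const, nsmul_eq_mul]
            congr 1
            rw [Finset.card_erase_of_mem (Finset.mem_univ i₀), Finset.card_univ,
              Fintype.card_fin]
            have : (1:ℕ) ≤ d := by omega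
            push_cast [Nat.cast_sub this]
            ring
        rw [hsplit]
        have h2ps : 2*p + 2*s < 0 := by linarith
        rw [max_eq_right h2ps.le, min_eq_left h2ps.le]
        by_cases hp0 : (0:ℝ) ≤ 2*p
        · rw [max_eq_left hp0, min_eq_right hp0]
          have heq : Λ * 0 + (2*p+2*s) + ((d:ℝ)-1) * (Λ*(2*p) + 0)
              = -(2*A*ε)/r^2 := by
            rw [hpdef, hsdef, hAdef]
            field_simp
            ring
          rw [heq]
          apply div_neg_of_neg_of_pos
          · nlinarith
          · positivity
        · push_neg at hp0
          rw [max_eq_right hp0.le, min_eq_left hp0.le]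
          nlinarith [mul_pos (show (0:ℝ) < (d:ℝ)-1 by linarith)
            (show (0:ℝ) < -(2*p) by linarith)]
      have h0 : 0 ≤ pucciPlus 1 Λ M := hsub x₀ hx₀BK
      linarith
    · have hx₀cb : ‖x₀‖ ≤ r := by
        have h := hclosΩ hx₀mem
        simpa [Metric.mem_closedBall, dist_zero_right] using h
      have hτ0 : 0 ≤ x₀ i₀ := hclos_nonneg x₀ hx₀mem
      have hτr : x₀ i₀ ≤ r := by nlinarith [hτsq x₀, norm_nonneg x₀]
      by_cases hx₀K : x₀ ∈ K
      · have hsph : ‖x₀‖ = r := by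
          by_contra hne
          have hlt : ‖x₀‖ < r := lt_of_le_of_ne hx₀cb hne
          exact hx₀Ω ⟨mem_ball_zero_iff.mpr hlt, hx₀K⟩
        have hum : u x₀ ≤ m := hm x₀ ⟨by
          rw [Metric.mem_sphere, dist_zero_right]; exact hsph, hx₀K⟩
        have hSS : ∑ i, (x₀ i)^2 = r^2 := by rw [sumsq_eq, hsph]
        have he : w x₀ - m = q*A*(x₀ i₀)*(r - x₀ i₀)/r^2 := by
          simp only [hw, hSS, hc1def, hpdef, hsdef, hqdef]
          field_simp
          ring
        have hge : 0 ≤ w x₀ - m := by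
          rw [he]
          apply div_nonneg _ (sq_nonneg r)
          have : 0 ≤ r - x₀ i₀ := by linarith
          positivity
        simp only [hv]
        linarith
      · have hub : u x₀ ≤ b := hbd x₀ ⟨⟨hclosK hx₀mem, hx₀K⟩, by
          rw [Metric.mem_closedBall, dist_zero_right]; exact hx₀cb⟩
        have hSle : ∑ i, (x₀ i)^2 ≤ r^2 := by
          rw [sumsq_eq]
          nlinarith [norm_nonneg x₀]
        have hStau : (x₀ i₀)^2 ≤ ∑ i, (x₀ i)^2 :=
          Finset.single_le_sum (f := fun i => (x₀ i)^2) (fun i _ => sq_nonneg _)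
            (Finset.mem_univ i₀)
        have he : r^2*(w x₀ - b) = ε*(r^2 - (∑ i, (x₀ i)^2))
            + q*A*(x₀ i₀)*(r - x₀ i₀) + q*((∑ i, (x₀ i)^2) - (x₀ i₀)^2)
            + q*(x₀ i₀)^2 := by
          simp only [hw, hc1def, hpdef, hsdef]
          field_simp
          ring
        have hge : 0 ≤ w x₀ - b := by
          have h2 : 0 ≤ r^2*(w x₀ - b) := by
            rw [he]
            have t1 : 0 ≤ ε*(r^2 - (∑ i, (x₀ i)^2)) := by nlinarith
            have t2 : 0 ≤ q*A*(x₀ i₀)*(r - x₀ i₀) := by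
              have : 0 ≤ r - x₀ i₀ := by linarith
              positivity
            have t3 : 0 ≤ q*((∑ i, (x₀ i)^2) - (x₀ i₀)^2) := by nlinarith
            have t4 : 0 ≤ q*(x₀ i₀)^2 := by positivity
            linarith
          nlinarith [h2, mul_pos hr0 hr0]
        simp only [hv]
        linarith
  have hvx : v x ≤ 0 := le_trans (hx₀max (subset_closure hx)) hvx₀
  have hx0 : 0 ≤ x i₀ := (hpos x hx).le
  have hxnorm : ‖x‖ ≤ r := le_of_lt (by simpa [Metric.mem_ball, dist_zero_right] using hx.1)
  have hwle : w x ≤ b + ε + q * (A * (x i₀) / r + ‖x‖^2 / r^2) := by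
    simp only [hw]
    rw [sumsq_eq x]
    have h1 : p * ‖x‖^2 ≤ q/r^2 * ‖x‖^2 := by
      apply mul_le_mul_of_nonneg_right _ (sq_nonneg _)
      rw [hpdef]
      exact (div_le_div_iff_of_pos_right (by positivity)).mpr (by linarith)
    have h2 : s * (x i₀)^2 ≤ 0 := mul_nonpos_of_nonpos_of_nonneg hs0 (sq_nonneg _)
    have h3 : c₁ * x i₀ = q * (A * x i₀ / r) := by rw [hc1def]; ring
    have expand : b + ε + q * (A * (x i₀) / r + ‖x‖^2 / r^2)
        = b + ε + q*(A*(x i₀)/r) + q/r^2*‖x‖^2 := by ring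
    rw [expand]
    linarith [h1, h2, h3]
  simp only [hv] at hvx
  exact le_trans (sub_nonpos.mp hvx) hwle
lemma coord_le_norm {d : ℕ} (y : EuclideanSpace ℝ (Fin d)) (i : Fin d) :
    y i ≤ ‖y‖ := by
  have h1 : (y i)^2 ≤ ‖y‖^2 := by
    rw [← sumsq_eq]
    exact Finset.single_le_sum (f := fun j => (y j)^2) (fun j _ => sq_nonneg _)
      (Finset.mem_univ i)
  nlinarith [norm_nonneg y, le_abs_self (y i), abs_nonneg (y i), sq_abs (y i)]


set_option maxHeartbeats 1000000 in
/-- Boundary Hölder continuity estimate for subsolutions of the Pucci maximal operator. -/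
theorem boundary_holder_continuity (d : ℕ) (hd : 2 ≤ d) (Λ : ℝ) (hΛ : 1 ≤ Λ)
    (β : ℝ) (hβ0 : 0 < β) (hβ1 : β < 1) :
    ∃ C > (0 : ℝ), ∀ K : Set (EuclideanSpace ℝ (Fin d)),
      IsOpen K →
      (0 : EuclideanSpace ℝ (Fin d)) ∈ frontier K →
      (Metric.ball (0 : EuclideanSpace ℝ (Fin d)) 1 ∩ K ⊆
        {x : EuclideanSpace ℝ (Fin d) | 0 < x ⟨d - 1, by omega⟩}) →
      ∀ u : EuclideanSpace ℝ (Fin d) → ℝ,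
        ContinuousOn u (closure (Metric.ball (0 : EuclideanSpace ℝ (Fin d)) 1 ∩ K)) →
        ContDiffOn ℝ 2 u (Metric.ball (0 : EuclideanSpace ℝ (Fin d)) 1 ∩ K) →
        (∀ x ∈ Metric.ball (0 : EuclideanSpace ℝ (Fin d)) 1 ∩ K, u x ≤ 1) →
        (∀ x ∈ Metric.ball (0 : EuclideanSpace ℝ (Fin d)) 1 ∩ K,
          0 ≤ pucciPlus 1 Λ (hessianE u x)) →
        (∀ x ∈ frontier (Metric.ball (0 : EuclideanSpace ℝ (Fin d)) 1 ∩ K), u x ≤ ‖x‖ ^ β) →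
        ∀ x ∈ Metric.ball (0 : EuclideanSpace ℝ (Fin d)) 1 ∩ K, u x ≤ C * ‖x‖ ^ β := by
  have hd1 : (1:ℝ) ≤ (d:ℝ) - 1 := by
    have : (2:ℝ) ≤ (d:ℝ) := by exact_mod_cast hd
    linarith
  set A := 1 + Λ*((d:ℝ)-1) with hAdef
  have hΛd : 0 ≤ Λ*((d:ℝ)-1) := by nlinarith
  have hA1 : 1 ≤ A := by rw [hAdef]; linarith
  have hβ1' : 0 < 1 - β := by linarith
  set δ := min (1/2 : ℝ) ((1/(2*(A+1))) ^ ((1:ℝ)/(1-β))) with hδdef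
  have hδ0 : 0 < δ := lt_min (by norm_num) (Real.rpow_pos_of_pos (by positivity) _)
  have hδh : δ ≤ 1/2 := min_le_left _ _
  have hδ1 : δ < 1 := lt_of_le_of_lt hδh (by norm_num)
  have hδβ0 : 0 < δ^β := Real.rpow_pos_of_pos hδ0 _
  have hkey : (A+1)*δ ≤ δ^β/2 := by
    have h2 : δ ≤ (1/(2*(A+1))) ^ ((1:ℝ)/(1-β)) := min_le_right _ _
    have h1 : δ ^ (1-β) ≤ 1/(2*(A+1)) := by
      calc δ^(1-β) ≤ ((1/(2*(A+1))) ^ ((1:ℝ)/(1-β)))^(1-β) :=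
            Real.rpow_le_rpow hδ0.le h2 hβ1'.le
        _ = 1/(2*(A+1)) := by
            rw [← Real.rpow_mul (by positivity), one_div_mul_cancel (ne_of_gt hβ1'),
              Real.rpow_one]
    have h3 : δ = δ^(1-β) * δ^β := by
      have hs : (1-β) + β = 1 := by ring
      rw [← Real.rpow_add hδ0, hs, Real.rpow_one]
    have h4 : (A+1)*δ^(1-β) ≤ 1/2 := by
      have h5 := mul_le_mul_of_nonneg_left h1 (by positivity : (0:ℝ) ≤ A+1)
      calc (A+1)*δ^(1-β) ≤ (A+1)*(1/(2*(A+1))) := h5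
        _ = 1/2 := by field_simp
    calc (A+1)*δ = ((A+1)*δ^(1-β))*δ^β := by rw [mul_assoc, ← h3]
      _ ≤ (1/2)*δ^β := mul_le_mul_of_nonneg_right h4 hδβ0.le
      _ = δ^β/2 := by ring
  set C₀ := 2/δ^β with hC₀def
  have hδβ1 : δ^β ≤ 1 := Real.rpow_le_one hδ0.le hδ1.le hβ0.le
  have hC₀pos : 0 < C₀ := by rw [hC₀def]; positivity
  have hC₀2 : 2 ≤ C₀ := by
    rw [hC₀def, le_div_iff₀ hδβ0]
    nlinarith
  have hCpos : 0 < C₀ * (2/δ)^β :=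
    mul_pos hC₀pos (Real.rpow_pos_of_pos (by positivity) _)
  refine ⟨C₀ * (2/δ)^β, hCpos, ?_⟩
  intro K hK h0K hhalf u hcont hC2 hub hsub hbdy x hx
  have hfrontier : ∀ y ∈ (closure K \ K), ‖y‖ < 1 →
      y ∈ frontier (Metric.ball (0:EuclideanSpace ℝ (Fin d)) 1 ∩ K) := by
    intro y hy hy1
    rw [frontier, (Metric.isOpen_ball.inter hK).interior_eq]
    constructor
    · rw [mem_closure_iff_nhds]
      intro t ht
      have hball : Metric.ball (0:EuclideanSpace ℝ (Fin d)) 1 ∈ nhds y :=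
        Metric.isOpen_ball.mem_nhds (mem_ball_zero_iff.mpr hy1)
      have h2 : t ∩ Metric.ball 0 1 ∈ nhds y := Filter.inter_mem ht hball
      obtain ⟨z, hz1, hz2⟩ := mem_closure_iff_nhds.mp hy.1 _ h2
      exact ⟨z, hz1.1, hz1.2, hz2⟩
    · intro hmem
      exact hy.2 hmem.2
  have hIH : ∀ k : ℕ, ∀ y ∈ Metric.closedBall (0:EuclideanSpace ℝ (Fin d)) (δ^k/2) ∩ K,
      u y ≤ C₀ * (δ^k)^β := by
    intro k
    induction k with
    | zero =>
      intro y hy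
      have hy1 : y ∈ Metric.ball (0:EuclideanSpace ℝ (Fin d)) 1 ∩ K := by
        refine ⟨?_, hy.2⟩
        have := hy.1
        rw [Metric.mem_closedBall] at this
        rw [Metric.mem_ball]
        rw [pow_zero] at this
        linarith
      calc u y ≤ 1 := hub y hy1
        _ ≤ C₀ * (δ^0)^β := by
            rw [pow_zero, Real.one_rpow, mul_one]; linarith
    | succ k ih =>
      intro y hy
      have hδk0 : (0:ℝ) < δ^k := pow_pos hδ0 k
      have hδk1 : δ^k ≤ 1 := pow_le_one₀ hδ0.le hδ1.le
      have hr0 : (0:ℝ) < δ^k/2 := by positivity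
      have hr1 : δ^k/2 < 1 := by linarith
      have hbb0 : (0:ℝ) ≤ (δ^k/2)^β := Real.rpow_nonneg hr0.le _
      have hbble : (δ^k/2)^β ≤ (δ^k)^β :=
        Real.rpow_le_rpow hr0.le (by linarith) hβ0.le
      have hδkβ0 : (0:ℝ) ≤ (δ^k)^β := Real.rpow_nonneg hδk0.le _
      have hbm : (δ^k/2)^β ≤ C₀ * (δ^k)^β := by
        calc (δ^k/2)^β ≤ (δ^k)^β := hbble
          _ ≤ C₀ * (δ^k)^β := le_mul_of_one_le_left hδkβ0 (by linarith)
      have hmS : ∀ y' ∈ Metric.sphere (0:EuclideanSpace ℝ (Fin d)) (δ^k/2) ∩ K,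
          u y' ≤ C₀ * (δ^k)^β := by
        intro y' hy'
        exact ih y' ⟨Metric.sphere_subset_closedBall hy'.1, hy'.2⟩
      have hbdS : ∀ y' ∈ (closure K \ K) ∩
          Metric.closedBall (0:EuclideanSpace ℝ (Fin d)) (δ^k/2), u y' ≤ (δ^k/2)^β := by
        intro y' hy'
        have hy'n : ‖y'‖ ≤ δ^k/2 := by
          have := hy'.2
          rwa [Metric.mem_closedBall, dist_zero_right] at this
        have hfr := hfrontier y' hy'.1 (lt_of_le_of_lt hy'n hr1)
        calc u y' ≤ ‖y'‖^β := hbdy y' hfr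
          _ ≤ (δ^k/2)^β := Real.rpow_le_rpow (norm_nonneg _) hy'n hβ0.le
      have hbar : ∀ z ∈ Metric.ball (0:EuclideanSpace ℝ (Fin d)) (δ^k/2) ∩ K,
          u z ≤ (δ^k/2)^β + (C₀*(δ^k)^β - (δ^k/2)^β) *
            ((1 + Λ*((d:ℝ)-1)) * (z ⟨d-1, by omega⟩) / (δ^k/2) + ‖z‖^2 / (δ^k/2)^2) := by
        intro z hz
        have habs : ∀ (a t : ℝ), (∀ ε, 0 < ε → a ≤ t + ε) → a ≤ t := by
          intro a t h
          by_contra hc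
          push_neg at hc
          have h2 := h ((a-t)/2) (by linarith)
          linarith
        refine habs (u z) _ (fun ε hεp => ?_)
        have hbs := barrier_step hd hΛ ⟨d-1, by omega⟩ hK hhalf hcont hC2 hsub
          hr0 hr1 hbb0 hbm hεp hmS hbdS z hz
        linarith [hbs]
      have hyball : y ∈ Metric.ball (0:EuclideanSpace ℝ (Fin d)) (δ^k/2) ∩ K := by
        refine ⟨?_, hy.2⟩
        have h1 := hy.1
        rw [Metric.mem_closedBall, dist_zero_right] at h1
        rw [Metric.mem_ball, dist_zero_right]
        have h2 : δ^(k+1) < δ^k := by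
          rw [pow_succ]
          exact mul_lt_of_lt_one_right hδk0 hδ1
        linarith
      have hyn : ‖y‖ ≤ δ*(δ^k/2) := by
        have h1 := hy.1
        rw [Metric.mem_closedBall, dist_zero_right] at h1
        calc ‖y‖ ≤ δ^(k+1)/2 := h1
          _ = δ*(δ^k/2) := by rw [pow_succ]; ring
      have hcoordy : y ⟨d-1, by omega⟩ ≤ ‖y‖ := coord_le_norm y _
      have hb1 := hbar y hyball
      have e1 : (1 + Λ*((d:ℝ)-1)) * (y ⟨d-1, by omega⟩) / (δ^k/2) ≤ A * δ := by
        rw [div_le_iff₀ hr0, ← hAdef]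
        have h1 : y ⟨d-1, by omega⟩ ≤ δ*(δ^k/2) := le_trans hcoordy hyn
        have hA0 : (0:ℝ) ≤ A := by linarith
        nlinarith
      have e2 : ‖y‖^2 / (δ^k/2)^2 ≤ δ := by
        rw [div_le_iff₀ (by positivity)]
        have h1 : 0 ≤ ‖y‖ := norm_nonneg y
        nlinarith
      have hm0 : 0 ≤ C₀*(δ^k)^β - (δ^k/2)^β := by linarith
      have hAδ0 : 0 ≤ A*δ + δ := by nlinarith
      have step1 : u y ≤ (δ^k/2)^β + (C₀*(δ^k)^β - (δ^k/2)^β) * (A*δ + δ) := by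
        have h6 : (1 + Λ*((d:ℝ)-1)) * (y ⟨d-1, by omega⟩) / (δ^k/2) + ‖y‖^2 / (δ^k/2)^2
            ≤ A*δ + δ := add_le_add e1 e2
        nlinarith [hb1, mul_le_mul_of_nonneg_left h6 hm0]
      have step2 : u y ≤ (δ^k)^β + (C₀*(δ^k)^β) * ((A+1)*δ) := by
        have h7 : (C₀*(δ^k)^β - (δ^k/2)^β) * (A*δ + δ) ≤ (C₀*(δ^k)^β) * ((A+1)*δ) := by
          exact mul_le_mul (by linarith) (le_of_eq (by ring)) hAδ0
            (mul_nonneg hC₀pos.le hδkβ0)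
        exact step1.trans (add_le_add hbble h7)
      have step3 : u y ≤ (δ^k)^β + (C₀*(δ^k)^β) * (δ^β/2) := by
        have h8 : (C₀*(δ^k)^β) * ((A+1)*δ) ≤ (C₀*(δ^k)^β) * (δ^β/2) :=
          mul_le_mul_of_nonneg_left hkey (by positivity)
        exact step2.trans (add_le_add_right h8 _)
      have hfin : (δ^k)^β + (C₀*(δ^k)^β) * (δ^β/2) = C₀ * (δ^(k+1))^β := by
        have h9 : (δ^(k+1):ℝ)^β = (δ^k)^β * δ^β := by
          rw [pow_succ, Real.mul_rpow (by positivity) hδ0.le]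
        rw [h9, hC₀def]
        field_simp
        ring
      rw [← hfin]
      exact step3
  have hxK : x ∈ K := hx.2
  have hxn0 : 0 < ‖x‖ := by
    rcases eq_or_ne x 0 with h | h
    · exfalso
      have h0 : (0:EuclideanSpace ℝ (Fin d)) ∉ K := by
        have h1 := h0K
        rw [frontier, hK.interior_eq] at h1
        exact h1.2
      exact h0 (h ▸ hxK)
    · exact norm_pos_iff.mpr h
  by_cases hcase : δ/2 < ‖x‖
  · have h1 : u x ≤ 1 := hub x hx
    have h2 : (δ/2)^β ≤ ‖x‖^β := Real.rpow_le_rpow (by positivity) hcase.le hβ0.le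
    have h3 : C₀*(2/δ)^β*(δ/2)^β = C₀ := by
      rw [mul_assoc, ← Real.mul_rpow (by positivity) (by positivity)]
      have h4 : (2/δ)*(δ/2) = 1 := by field_simp
      rw [h4, Real.one_rpow, mul_one]
    calc u x ≤ 1 := h1
      _ ≤ C₀*(2/δ)^β*(δ/2)^β := by rw [h3]; linarith
      _ ≤ C₀*(2/δ)^β*‖x‖^β :=
          mul_le_mul_of_nonneg_left h2 (le_of_lt hCpos)
  · push_neg at hcase
    have hex : ∃ n : ℕ, δ^n/2 < ‖x‖ := by
      obtain ⟨n, hn⟩ := exists_pow_lt_of_lt_one hxn0 hδ1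
      exact ⟨n, by linarith [pow_pos hδ0 n]⟩
    have hn₀2 : 2 ≤ Nat.find hex := by
      rw [Nat.le_find_iff]
      intro m hm
      push_neg
      have hm1 : m ≤ 1 := by omega
      have : δ^1 ≤ δ^m := pow_le_pow_of_le_one hδ0.le hδ1.le hm1
      rw [pow_one] at this
      linarith
    set k := Nat.find hex - 1 with hkdef
    have hk1 : k + 1 = Nat.find hex := by omega
    have hspec : δ^(k+1)/2 < ‖x‖ := by rw [hk1]; exact Nat.find_spec hex
    have hmin : ¬ (δ^k/2 < ‖x‖) := Nat.find_min hex (by omega)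
    push_neg at hmin
    have hux : u x ≤ C₀*(δ^k)^β := by
      apply hIH k x
      exact ⟨by rw [Metric.mem_closedBall, dist_zero_right]; exact hmin, hxK⟩
    have hδk : δ^k ≤ 2/δ * ‖x‖ := by
      have h8 : δ^k * δ < 2*‖x‖ := by
        rw [pow_succ] at hspec
        linarith
      have h9 : 2/δ*‖x‖ = 2*‖x‖/δ := by ring
      rw [h9, le_div_iff₀ hδ0]
      linarith
    have h9 : (δ^k:ℝ)^β ≤ (2/δ*‖x‖)^β :=
      Real.rpow_le_rpow (by positivity) hδk hβ0.le
    have h10 : ((2/δ*‖x‖:ℝ))^β = (2/δ)^β*‖x‖^β :=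
      Real.mul_rpow (by positivity) (norm_nonneg x)
    calc u x ≤ C₀*(δ^k)^β := hux
      _ ≤ C₀*((2/δ*‖x‖)^β) := mul_le_mul_of_nonneg_left h9 hC₀pos.le
      _ = C₀*(2/δ)^β*‖x‖^β := by rw [h10]; ring
end

section
/- Let β ∈ (0,1) and C₀ ≥ 1, and set M = (2C₀)^{1/(1−β)}. There exists a constant C > 0 depending only on β and C₀ such that: for every nondecreasing function s : (0,1] → [0,∞) satisfying s(r) ≤ (M·r)^β + (C₀/M)·s(M·r) for all r ∈ (0, 1/M], one has s(r) ≤ C·(1 + s(1))·r^β for all r ∈ (0,1]. -/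
/-- Dyadic iteration yielding a Hölder modulus from a one-step barrier estimate. -/
theorem dyadic_iteration_holder (β C₀ M : ℝ) (hβ0 : 0 < β) (hβ1 : β < 1) (hC₀ : 1 ≤ C₀)
    (hM : M = (2 * C₀) ^ ((1 : ℝ) / (1 - β))) :
    ∃ C > (0 : ℝ), ∀ s : ℝ → ℝ,
      (∀ r : ℝ, 0 < r → r ≤ 1 → 0 ≤ s r) →
      (∀ r₁ r₂ : ℝ, 0 < r₁ → r₁ ≤ r₂ → r₂ ≤ 1 → s r₁ ≤ s r₂) →
      (∀ r : ℝ, 0 < r → r ≤ 1 / M → s r ≤ (M * r) ^ β + C₀ / M * s (M * r)) →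
      ∀ r : ℝ, 0 < r → r ≤ 1 → s r ≤ C * (1 + s 1) * r ^ β := by
  have h1β : 0 < 1 - β := by linarith
  have h2C0 : (0:ℝ) < 2 * C₀ := by linarith
  have hM2 : (2:ℝ) ≤ M := by
    rw [hM]
    calc (2:ℝ) ≤ 2 * C₀ := by linarith
      _ = (2 * C₀) ^ (1:ℝ) := (Real.rpow_one _).symm
      _ ≤ (2 * C₀) ^ ((1:ℝ) / (1 - β)) := by
          apply Real.rpow_le_rpow_of_exponent_le (by linarith)
          rw [le_div_iff₀ h1β]; nlinarith
  have hM0 : (0:ℝ) < M := by linarith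
  have hM1 : (1:ℝ) ≤ M := by linarith
  have hkey : M ^ (1 - β) = 2 * C₀ := by
    rw [hM, ← Real.rpow_mul (le_of_lt h2C0)]
    rw [show (1:ℝ) / (1 - β) * (1 - β) = 1 by field_simp]
    exact Real.rpow_one _
  have hMsplit : M ^ (1 - β) * M ^ β = M := by
    rw [← Real.rpow_add hM0]
    norm_num
  have h2CM : 2 * C₀ * M ^ β = M := by rw [← hkey]; exact hMsplit
  have hMβ0 : (0:ℝ) < M ^ β := Real.rpow_pos_of_pos hM0 β
  have hMβ1 : (1:ℝ) ≤ M ^ β := by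
    calc (1:ℝ) = M ^ (0:ℝ) := (Real.rpow_zero M).symm
      _ ≤ M ^ β := Real.rpow_le_rpow_of_exponent_le hM1 hβ0.le
  have hhalf : C₀ / M * M ^ β = 1 / 2 := by
    field_simp
    linarith
  refine ⟨2 * M ^ β * M ^ β, by positivity, ?_⟩
  intro s hnn hmono hstep r hr0 hr1
  set u : ℕ → ℝ := fun k => M ^ (-(k:ℝ)) with hu
  have hu0 : ∀ k, 0 < u k := fun k => Real.rpow_pos_of_pos hM0 _
  have hu1 : ∀ k, u k ≤ 1 := fun k =>
    Real.rpow_le_one_of_one_le_of_nonpos hM1 (by simp)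
  have huz : u 0 = 1 := by simp [hu]
  have hustep : ∀ k : ℕ, M * u (k + 1) = u k := by
    intro k
    have : M * u (k + 1) = M ^ (1:ℝ) * M ^ (-((k:ℝ) + 1)) := by
      simp only [hu, Real.rpow_one, Nat.cast_add, Nat.cast_one]
    rw [this, ← Real.rpow_add hM0]
    congr 1
    ring
  have hupow : ∀ k : ℕ, (u k) ^ β = M ^ β * (u (k + 1)) ^ β := by
    intro k
    simp only [hu]
    rw [← Real.rpow_mul hM0.le, ← Real.rpow_mul hM0.le, ← Real.rpow_add hM0]
    congr 1
    push_cast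
    ring
  have hs1 : 0 ≤ s 1 := hnn 1 one_pos le_rfl
  -- main induction
  have main : ∀ k : ℕ, s (u k) ≤ (2 * M ^ β + s 1) * (u k) ^ β := by
    intro k
    induction k with
    | zero =>
        rw [huz, Real.one_rpow]
        nlinarith
    | succ k ih =>
        have hle : u (k + 1) ≤ 1 / M := by
          rw [div_eq_inv_mul, mul_one, ← Real.rpow_neg_one M]
          apply Real.rpow_le_rpow_of_exponent_le hM1
          push_cast; linarith
        have h1 := hstep (u (k + 1)) (hu0 _) hle
        rw [hustep k] at h1
        have hukβ : (u (k+1)) ^ β > 0 := Real.rpow_pos_of_pos (hu0 _) β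
        have h2 : C₀ / M * s (u k) ≤ C₀ / M * ((2 * M ^ β + s 1) * (u k) ^ β) := by
          apply mul_le_mul_of_nonneg_left ih
          positivity
        have h3 : s (u (k+1)) ≤ (u k) ^ β + C₀ / M * ((2 * M ^ β + s 1) * (u k) ^ β) := by
          linarith
        rw [hupow k] at h3
        have hC0M : C₀ / M * M ^ β = 1 / 2 := hhalf
        calc s (u (k+1)) ≤ M ^ β * (u (k+1)) ^ β
              + C₀ / M * ((2 * M ^ β + s 1) * (M ^ β * (u (k+1)) ^ β)) := h3
          _ = M ^ β * (u (k+1)) ^ β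
              + (C₀ / M * M ^ β) * ((2 * M ^ β + s 1) * (u (k+1)) ^ β) := by ring
          _ = M ^ β * (u (k+1)) ^ β
              + (M ^ β + s 1 / 2) * (u (k+1)) ^ β := by rw [hC0M]; ring
          _ ≤ (2 * M ^ β + s 1) * (u (k+1)) ^ β := by nlinarith
  -- find the dyadic scale for r
  have hex : ∃ n : ℕ, u n < r := by
    obtain ⟨n, hn⟩ := exists_pow_lt_of_lt_one hr0 (by norm_num : (1:ℝ)/2 < 1)
    refine ⟨n, lt_of_le_of_lt ?_ hn⟩
    have h2n : ((2:ℝ))^n ≤ M ^ n := pow_le_pow_left₀ (by norm_num) hM2 n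
    have : u n = (M ^ n)⁻¹ := by
      simp [hu, Real.rpow_neg hM0.le, Real.rpow_natCast]
    rw [this, div_pow, one_pow]
    rw [one_div]
    apply inv_anti₀ (by positivity) h2n
  classical
  let n₀ := Nat.find hex
  have hn₀spec : u n₀ < r := Nat.find_spec hex
  have hn₀ne : n₀ ≠ 0 := by
    intro h
    have := hn₀spec
    rw [h, huz] at this
    linarith
  obtain ⟨k, hk⟩ : ∃ k, n₀ = k + 1 := ⟨n₀ - 1, (Nat.succ_pred_eq_of_pos (Nat.pos_of_ne_zero hn₀ne)).symm⟩
  have hrk : r ≤ u k := by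
    by_contra h
    push_neg at h
    have := Nat.find_min hex (m := k) (by omega)
    exact this h
  have huk1r : u (k + 1) ≤ r := by rw [← hk]; exact hn₀spec.le
  -- conclude
  have hmon := hmono r (u k) hr0 hrk (hu1 k)
  have hmain := main k
  have hrβ : (u (k+1)) ^ β ≤ r ^ β :=
    Real.rpow_le_rpow (hu0 _).le huk1r hβ0.le
  have hfin : s r ≤ (2 * M ^ β + s 1) * (M ^ β * (u (k+1)) ^ β) := by
    rw [← hupow k]
    linarith
  have hrβ0 : (0:ℝ) ≤ r ^ β := Real.rpow_nonneg hr0.le β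
  calc s r ≤ (2 * M ^ β + s 1) * (M ^ β * (u (k+1)) ^ β) := hfin
    _ ≤ (2 * M ^ β + s 1) * (M ^ β * r ^ β) := by
        apply mul_le_mul_of_nonneg_left _ (by positivity)
        exact mul_le_mul_of_nonneg_left hrβ hMβ0.le
    _ ≤ 2 * M ^ β * M ^ β * (1 + s 1) * r ^ β := by
        nlinarith [mul_nonneg (mul_nonneg (mul_nonneg hs1 hMβ0.le)
          (by linarith : (0:ℝ) ≤ 2 * M ^ β - 1)) hrβ0]
end

section
/- Let d ≥ 1, Λ ≥ 1, and let F : Sym_d(ℝ) → ℝ be uniformly elliptic with constants 1, Λ. Let η ∈ ℝ^d be a unit vector and ε > 0, and define F_ε(M) = max{ F(M), F(M + ε·(ηᵀMη)·ηηᵀ) }. Then: (a) F_ε is uniformly elliptic with constants 1, Λ(1+ε), i.e. Tr(N) ≤ F_ε(M) − F_ε(M+N) ≤ Λ(1+ε)·Tr(N) for all symmetric M and positive semidefinite N; (b) if F is positively 1-homogeneous (F(tM) = t·F(M) for all t > 0), then so is F_ε; (c) |F_ε(M) − F(M)| ≤ Λ·ε·‖M‖ for all M ∈ Sym_d(ℝ),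 where ‖·‖ is the operator norm. -/
open Matrix

/-- `F : Sym_d(ℝ) → ℝ` is uniformly elliptic with constants `0 < lam ≤ Lam`. -/
def UniformlyElliptic (d : ℕ) (lam Lam : ℝ) (F : Matrix (Fin d) (Fin d) ℝ → ℝ) : Prop :=
  ∀ M N : Matrix (Fin d) (Fin d) ℝ, M.IsHermitian → N.PosSemidef →
    lam * N.trace ≤ F M - F (M + N) ∧ F M - F (M + N) ≤ Lam * N.trace

/-- The quadratic form `ηᵀMη = Σᵢⱼ ηᵢ Mᵢⱼ ηⱼ`. -/
def quadForm {d : ℕ} (η : Fin d → ℝ) (M : Matrix (Fin d) (Fin d) ℝ) : ℝ :=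
  ∑ i, ∑ j, η i * M i j * η j

/-- The rank-one matrix `ηηᵀ` with entries `ηᵢηⱼ`. -/
def rankOne {d : ℕ} (η : Fin d → ℝ) : Matrix (Fin d) (Fin d) ℝ :=
  Matrix.of fun i j => η i * η j

/-- The perturbed operator `F_ε(M) = max{F(M), F(M + ε·(ηᵀMη)·ηηᵀ)}`. -/
def Feps {d : ℕ} (F : Matrix (Fin d) (Fin d) ℝ → ℝ) (η : Fin d → ℝ) (ε : ℝ)
    (M : Matrix (Fin d) (Fin d) ℝ) : ℝ :=
  max (F M) (F (M + (ε * quadForm η M) • rankOne η))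

/-- The operator norm of a matrix, acting on Euclidean space. -/
noncomputable def matOpNorm {d : ℕ} (M : Matrix (Fin d) (Fin d) ℝ) : ℝ :=
  ‖Matrix.toEuclideanCLM (𝕜 := ℝ) M‖

section Aux

variable {d : ℕ} (η : Fin d → ℝ)

lemma quad_dot (M : Matrix (Fin d) (Fin d) ℝ) : quadForm η M = η ⬝ᵥ M *ᵥ η := by
  simp [quadForm, dotProduct, mulVec, Finset.mul_sum, mul_assoc]

lemma quad_add (M N : Matrix (Fin d) (Fin d) ℝ) :
    quadForm η (M + N) = quadForm η M + quadForm η N := by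
  simp [quadForm, mul_add, add_mul, Finset.sum_add_distrib]

lemma quad_smul (t : ℝ) (M : Matrix (Fin d) (Fin d) ℝ) :
    quadForm η (t • M) = t * quadForm η M := by
  simp only [quadForm, Matrix.smul_apply, smul_eq_mul, Finset.mul_sum]
  exact Finset.sum_congr rfl fun i _ => Finset.sum_congr rfl fun j _ => by ring

lemma rankOne_posSemidef : (rankOne η).PosSemidef := by
  refine PosSemidef.of_dotProduct_mulVec_nonneg ?_ ?_
  · ext i j; simp [rankOne, conjTranspose, mul_comm]
  · intro x
    have : (rankOne η) *ᵥ x = fun i => η i * (∑ j, η j * x j) := by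
      ext i; simp [rankOne, mulVec, dotProduct, Finset.mul_sum, mul_assoc]
    rw [this]
    have : (star x) ⬝ᵥ (fun i => η i * (∑ j, η j * x j)) = (∑ j, η j * x j)^2 := by
      simp only [dotProduct, star_trivial, sq]
      have h2 : ∀ i, x i * (η i * (∑ j, η j * x j)) = (η i * x i) * (∑ j, η j * x j) :=
        fun i => by ring
      simp_rw [h2, ← Finset.sum_mul]
    rw [this]; positivity

lemma trace_rankOne : (rankOne η).trace = ∑ i, η i ^ 2 := by
  simp [trace, rankOne, diag, sq]

lemma smul_posSemidef {c : ℝ} (hc : 0 ≤ c) {A : Matrix (Fin d) (Fin d) ℝ}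
    (hA : A.PosSemidef) : (c • A).PosSemidef := by
  refine PosSemidef.of_dotProduct_mulVec_nonneg ?_ ?_
  · have := hA.1
    simp [IsHermitian] at this ⊢
    rw [this]
  · intro x
    rw [smul_mulVec, dotProduct_smul]
    exact mul_nonneg hc (hA.dotProduct_mulVec_nonneg x)

lemma smul_isHermitian {c : ℝ} {A : Matrix (Fin d) (Fin d) ℝ}
    (hA : A.IsHermitian) : (c • A).IsHermitian := by
  simp [IsHermitian] at hA ⊢
  rw [hA]

lemma quad_nonneg {N : Matrix (Fin d) (Fin d) ℝ} (hN : N.PosSemidef) :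
    0 ≤ quadForm η N := by
  rw [quad_dot]
  simpa using hN.dotProduct_mulVec_nonneg η

lemma psd_trace_nonneg_s11 {N : Matrix (Fin d) (Fin d) ℝ} (hN : N.PosSemidef) :
    0 ≤ N.trace := by
  rw [trace]
  refine Finset.sum_nonneg fun i _ => ?_
  have := hN.dotProduct_mulVec_nonneg (Pi.single i 1)
  simpa [dotProduct, mulVec, Pi.single_apply, Finset.mul_sum] using this

open scoped MatrixOrder in
lemma quad_le_trace (hη : ∑ i, η i ^ 2 = 1) {N : Matrix (Fin d) (Fin d) ℝ}
    (hN : N.PosSemidef) : quadForm η N ≤ N.trace := by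
  set S := CFC.sqrt N with hSdef
  have hS : S.PosSemidef := (CFC.sqrt_nonneg N).posSemidef
  have hSS : S * S = N := CFC.sqrt_mul_sqrt_self N hN.nonneg
  have hsym : ∀ i j, S i j = S j i := fun i j => by
    conv_lhs => rw [← hS.1]
    simp [conjTranspose]
  have hq : quadForm η N = ∑ k, (∑ i, S k i * η i) ^ 2 := by
    rw [quad_dot, ← hSS, ← mulVec_mulVec, dotProduct_mulVec]
    have : S.vecMul η = S *ᵥ η := by
      ext k; simp [vecMul, mulVec, dotProduct]
      exact Finset.sum_congr rfl fun i _ => by rw [hsym i k]; ring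
    rw [this]
    simp [dotProduct, mulVec, sq]
  have ht : N.trace = ∑ k, ∑ i, S k i ^ 2 := by
    rw [← hSS]
    simp only [trace, diag, mul_apply, sq]
    exact Finset.sum_congr rfl fun k _ => Finset.sum_congr rfl fun i _ => by
      rw [hsym i k]
  rw [hq, ht]
  refine Finset.sum_le_sum fun k _ => ?_
  calc (∑ i, S k i * η i) ^ 2 ≤ (∑ i, S k i ^ 2) * (∑ i, η i ^ 2) :=
        Finset.sum_mul_sq_le_sq_mul_sq _ _ _
    _ = ∑ i, S k i ^ 2 := by rw [hη, mul_one]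

lemma abs_quad_le_opNorm (hη : ∑ i, η i ^ 2 = 1) (M : Matrix (Fin d) (Fin d) ℝ) :
    |quadForm η M| ≤ matOpNorm M := by
  rw [quad_dot]
  set x : EuclideanSpace ℝ (Fin d) := (WithLp.equiv 2 (Fin d → ℝ)).symm η with hx
  have hnx : ‖x‖ = 1 := by
    rw [EuclideanSpace.norm_eq]
    simp only [hx, WithLp.equiv_symm_apply, WithLp.ofLp_toLp, Real.norm_eq_abs, sq_abs]
    rw [hη, Real.sqrt_one]
  have hkey : η ⬝ᵥ M *ᵥ η = inner ℝ x (Matrix.toEuclideanCLM (𝕜 := ℝ) M x) := by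
    rw [hx, WithLp.equiv_symm_apply, toEuclideanCLM_toLp]
    simp [PiLp.inner_apply, dotProduct, mul_comm]
  rw [hkey]
  calc |inner ℝ x ((Matrix.toEuclideanCLM (𝕜 := ℝ) M) x)|
      ≤ ‖x‖ * ‖(Matrix.toEuclideanCLM (𝕜 := ℝ) M) x‖ := abs_real_inner_le_norm _ _
    _ ≤ ‖x‖ * (matOpNorm M * ‖x‖) := by
        gcongr
        exact ContinuousLinearMap.le_opNorm _ _
    _ = matOpNorm M := by rw [hnx]; ring

end Aux

/-- Properties of the monotone perturbation `F_ε`: ellipticity, positive 1-homogeneity,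
and closeness to `F`. -/
theorem Feps_properties (d : ℕ) (hd : 1 ≤ d) (Λ : ℝ) (hΛ : 1 ≤ Λ)
    (F : Matrix (Fin d) (Fin d) ℝ → ℝ) (hF : UniformlyElliptic d 1 Λ F)
    (η : Fin d → ℝ) (hη : ∑ i, η i ^ 2 = 1) (ε : ℝ) (hε : 0 < ε) :
    UniformlyElliptic d 1 (Λ * (1 + ε)) (Feps F η ε) ∧
    ((∀ t : ℝ, 0 < t → ∀ M : Matrix (Fin d) (Fin d) ℝ, F (t • M) = t * F M) →
      ∀ t : ℝ, 0 < t → ∀ M : Matrix (Fin d) (Fin d) ℝ,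
        Feps F η ε (t • M) = t * Feps F η ε M) ∧
    (∀ M : Matrix (Fin d) (Fin d) ℝ, M.IsHermitian →
      |Feps F η ε M - F M| ≤ Λ * ε * matOpNorm M) := by
  have hPpsd := rankOne_posSemidef η
  have htrP : (rankOne η).trace = 1 := by rw [trace_rankOne, hη]
  refine ⟨?_, ?_, ?_⟩
  · -- (a) uniform ellipticity
    intro M N hM hN
    have hqN : 0 ≤ quadForm η N := quad_nonneg η hN
    have hqNtr : quadForm η N ≤ N.trace := quad_le_trace η hη hN
    have htrN : 0 ≤ N.trace := psd_trace_nonneg_s11 hN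
    -- first branch bounds
    obtain ⟨h1, h2⟩ := hF M N hM hN
    -- second branch bounds
    set M' := M + (ε * quadForm η M) • rankOne η with hM'def
    set N' := N + (ε * quadForm η N) • rankOne η with hN'def
    have hM' : M'.IsHermitian := hM.add (smul_isHermitian hPpsd.1)
    have hN' : N'.PosSemidef :=
      hN.add (smul_posSemidef (mul_nonneg hε.le hqN) hPpsd)
    have hsplit : M + N + (ε * quadForm η (M + N)) • rankOne η = M' + N' := by
      rw [quad_add, hM'def, hN'def, mul_add, add_smul]
      abel
    have htrN' : N'.trace = N.trace + ε * quadForm η N := by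
      rw [hN'def, trace_add, trace_smul, htrP, smul_eq_mul, mul_one]
    obtain ⟨h3, h4⟩ := hF M' N' hM' hN'
    have hεq : 0 ≤ ε * quadForm η N := mul_nonneg hε.le hqN
    have hub : Λ * N'.trace ≤ Λ * (1 + ε) * N.trace := by
      rw [htrN']
      have h5 : ε * quadForm η N ≤ ε * N.trace := by
        exact mul_le_mul_of_nonneg_left hqNtr hε.le
      nlinarith
    constructor
    · -- lower bound
      rw [Feps, Feps, hsplit]
      have la : F (M + N) + 1 * N.trace ≤ F M := by linarith
      have lb : F (M' + N') + 1 * N.trace ≤ F M' := by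
        have : 1 * N.trace ≤ 1 * N'.trace := by rw [htrN']; linarith
        linarith
      have : max (F (M + N)) (F (M' + N')) + 1 * N.trace ≤ max (F M) (F M') := by
        rcases max_cases (F (M + N)) (F (M' + N')) with ⟨he, _⟩ | ⟨he, _⟩ <;> rw [he]
        · exact le_trans la (le_max_left _ _)
        · exact le_trans lb (le_max_right _ _)
      linarith
    · -- upper bound
      rw [Feps, Feps, hsplit]
      have ua : F M ≤ F (M + N) + Λ * (1 + ε) * N.trace := by nlinarith
      have ub : F M' ≤ F (M' + N') + Λ * (1 + ε) * N.trace := by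
        have := le_trans h4 hub
        linarith
      have : max (F M) (F M') ≤ max (F (M + N)) (F (M' + N')) + Λ * (1 + ε) * N.trace := by
        rcases max_cases (F M) (F M') with ⟨he, _⟩ | ⟨he, _⟩ <;> rw [he]
        · exact le_trans ua (by gcongr; exact le_max_left _ _)
        · exact le_trans ub (by gcongr; exact le_max_right _ _)
      linarith
  · -- (b) positive homogeneity
    intro hhom t ht M
    have hq : ε * quadForm η (t • M) = t * (ε * quadForm η M) := by
      rw [quad_smul]; ring
    rw [Feps, Feps, hhom t ht M, hq,
      show t • M + (t * (ε * quadForm η M)) • rankOne η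
          = t • (M + (ε * quadForm η M) • rankOne η) by rw [smul_add, mul_smul],
      hhom t ht _]
    rcases le_total (F M) (F (M + (ε * quadForm η M) • rankOne η)) with h | h
    · rw [max_eq_right h, max_eq_right (by nlinarith)]
    · rw [max_eq_left h, max_eq_left (by nlinarith)]
  · -- (c) closeness
    intro M hM
    have hnorm : 0 ≤ matOpNorm M := norm_nonneg _
    have habsq : |quadForm η M| ≤ matOpNorm M := abs_quad_le_opNorm η hη M
    set c := ε * quadForm η M with hc
    rcases le_or_gt 0 (quadForm η M) with hq | hq
    · -- q ≥ 0 : the max is F M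
      have hcpos : 0 ≤ c := mul_nonneg hε.le hq
      have hNpsd : (c • rankOne η).PosSemidef := smul_posSemidef hcpos hPpsd
      obtain ⟨h1, _⟩ := hF M (c • rankOne η) hM hNpsd
      have htr : (c • rankOne η).trace = c := by
        rw [trace_smul, htrP, smul_eq_mul, mul_one]
      rw [htr] at h1
      have : F (M + c • rankOne η) ≤ F M := by linarith
      rw [Feps, ← hc, max_eq_left this]
      simp only [sub_self, abs_zero]
      positivity
    · -- q < 0
      have hcneg : c < 0 := mul_neg_of_pos_of_neg hε hq
      have hNpsd : ((-c) • rankOne η).PosSemidef :=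
        smul_posSemidef (by linarith) hPpsd
      have hMc : (M + c • rankOne η).IsHermitian := hM.add (smul_isHermitian hPpsd.1)
      obtain ⟨h1, h2⟩ := hF (M + c • rankOne η) ((-c) • rankOne η) hMc hNpsd
      have hsum : M + c • rankOne η + (-c) • rankOne η = M := by
        rw [add_assoc, ← add_smul]
        simp
      rw [hsum] at h1 h2
      have htr : ((-c) • rankOne η).trace = -c := by
        rw [trace_smul, htrP, smul_eq_mul, mul_one]
      rw [htr] at h1 h2
      -- Feps M - F M ∈ [0, Λ * (-c)]
      have hge : F M ≤ Feps F η ε M := le_max_left _ _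
      have hle : Feps F η ε M ≤ F M + Λ * (-c) := by
        rw [Feps, ← hc]
        refine max_le (by nlinarith) (by linarith)
      rw [abs_of_nonneg (by linarith)]
      have hq2 : -quadForm η M ≤ matOpNorm M := by
        rw [← abs_neg] at habsq
        exact le_trans (le_abs_self _) habsq
      have : Λ * (-c) ≤ Λ * ε * matOpNorm M := by
        rw [hc]
        have h5 : ε * (-quadForm η M) ≤ ε * matOpNorm M :=
          mul_le_mul_of_nonneg_left hq2 hε.le
        nlinarith
      linarith
end
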